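/- For nonzero vectors x, y, z in a finite-dimensional real or complex inner product space, |cos(θ(x,z)) − cos(θ(y,z))| ≤ sin(θ(x,y)). -/

import Mathlib

open scoped InnerProductSpace

/-- The acute angle between two vectors of an inner 𝕜 product space over `𝕜 = ℝ` or `ℂ`:
`θ(x,y) = arccos (|(x,y)| / (‖x‖‖y‖)) ∈ [0, π/2]`. -/
noncomputable def acuteAngle (𝕜 : Type*) {H : Type*} [RCLike 𝕜] [NormedAddCommGroup H]
    [InnerProductSpace 𝕜 H] (x y : H) : ℝ :=
  Real.arccos (‖(inner 𝕜 x y : 𝕜)‖ / (‖x‖ * ‖y‖))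

lemma key_one_side {𝕜 H : Type*} [RCLike 𝕜] [NormedAddCommGroup H]
    [InnerProductSpace 𝕜 H] (x y z : H) (hx : ‖x‖ = 1) (hy : ‖y‖ = 1) (hz : ‖z‖ = 1) :
    ‖(inner 𝕜 x z : 𝕜)‖ - ‖(inner 𝕜 y z : 𝕜)‖ ≤ Real.sqrt (1 - ‖(inner 𝕜 x y : 𝕜)‖ ^ 2) := by
  set c : 𝕜 := inner 𝕜 y x with hc
  have hcxy : ‖(inner 𝕜 x y : 𝕜)‖ = ‖c‖ := norm_inner_symm x y
  set w : H := x - c • y with hw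
  have hxy : (inner 𝕜 x y : 𝕜) = (starRingEnd 𝕜) c := by rw [hc, inner_conj_symm]
  have hw2 : ‖w‖ ^ 2 = 1 - ‖c‖ ^ 2 := by
    rw [hw, @norm_sub_sq 𝕜, inner_smul_right, hxy, RCLike.mul_conj, norm_smul, hx, hy, mul_one]
    rw [← RCLike.ofReal_pow, RCLike.ofReal_re]
    ring
  have hwn : ‖w‖ = Real.sqrt (1 - ‖c‖ ^ 2) := by
    rw [← hw2, Real.sqrt_sq (norm_nonneg _)]
  have hc1 : ‖c‖ ≤ 1 := by
    have := norm_inner_le_norm (𝕜 := 𝕜) y x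
    rwa [hx, hy, one_mul] at this
  have hxz : (inner 𝕜 x z : 𝕜) = inner 𝕜 w z + (starRingEnd 𝕜) c * inner 𝕜 y z := by
    simp [hw, inner_sub_left, inner_smul_left]
  calc ‖(inner 𝕜 x z : 𝕜)‖ - ‖(inner 𝕜 y z : 𝕜)‖
      ≤ (‖(inner 𝕜 w z : 𝕜)‖ + ‖c‖ * ‖(inner 𝕜 y z : 𝕜)‖) - ‖(inner 𝕜 y z : 𝕜)‖ := by
        rw [hxz]
        have := norm_add_le (inner 𝕜 w z : 𝕜) ((starRingEnd 𝕜) c * inner 𝕜 y z)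
        rw [norm_mul, RCLike.norm_conj] at this
        linarith
    _ ≤ ‖(inner 𝕜 w z : 𝕜)‖ := by
        nlinarith [norm_nonneg (inner 𝕜 y z : 𝕜)]
    _ ≤ ‖w‖ * ‖z‖ := norm_inner_le_norm w z
    _ = Real.sqrt (1 - ‖(inner 𝕜 x y : 𝕜)‖ ^ 2) := by rw [hz, mul_one, hwn, hcxy]

lemma key_abs {𝕜 H : Type*} [RCLike 𝕜] [NormedAddCommGroup H]
    [InnerProductSpace 𝕜 H] (x y z : H) (hx : ‖x‖ = 1) (hy : ‖y‖ = 1) (hz : ‖z‖ = 1) :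
    |‖(inner 𝕜 x z : 𝕜)‖ - ‖(inner 𝕜 y z : 𝕜)‖| ≤ Real.sqrt (1 - ‖(inner 𝕜 x y : 𝕜)‖ ^ 2) := by
  rw [abs_sub_le_iff]
  refine ⟨key_one_side (𝕜 := 𝕜) x y z hx hy hz, ?_⟩
  have := key_one_side (𝕜 := 𝕜) y x z hy hx hz
  rwa [norm_inner_symm y x] at this

/-- For nonzero vectors `x, y, z` in a finite-dimensional real or complex inner 𝕜 product space,
`|cos θ(x,z) − cos θ(y,z)| ≤ sin θ(x,y)`. -/
theorem cos_angle_diff_le {𝕜 H : Type*} [RCLike 𝕜] [NormedAddCommGroup H]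
    [InnerProductSpace 𝕜 H] [FiniteDimensional 𝕜 H]
    (x y z : H) (hx : x ≠ 0) (hy : y ≠ 0) (hz : z ≠ 0) :
    |Real.cos (acuteAngle 𝕜 x z) - Real.cos (acuteAngle 𝕜 y z)| ≤
      Real.sin (acuteAngle 𝕜 x y) := by
  have hxn : (0:ℝ) < ‖x‖ := norm_pos_iff.mpr hx
  have hyn : (0:ℝ) < ‖y‖ := norm_pos_iff.mpr hy
  have hzn : (0:ℝ) < ‖z‖ := norm_pos_iff.mpr hz
  set u : H := ((‖x‖ : 𝕜))⁻¹ • x with hu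
  set v : H := ((‖y‖ : 𝕜))⁻¹ • y with hv
  set t : H := ((‖z‖ : 𝕜))⁻¹ • z with ht
  have hun : ‖u‖ = 1 := by
    rw [hu, norm_smul, norm_inv, RCLike.norm_ofReal, abs_norm, inv_mul_cancel₀ hxn.ne']
  have hvn : ‖v‖ = 1 := by
    rw [hv, norm_smul, norm_inv, RCLike.norm_ofReal, abs_norm, inv_mul_cancel₀ hyn.ne']
  have htn : ‖t‖ = 1 := by
    rw [ht, norm_smul, norm_inv, RCLike.norm_ofReal, abs_norm, inv_mul_cancel₀ hzn.ne']
  have hinner : ∀ (a b : H) (ha : (0:ℝ) < ‖a‖) (hb : (0:ℝ) < ‖b‖),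
      ‖(inner 𝕜 (((‖a‖ : 𝕜))⁻¹ • a) (((‖b‖ : 𝕜))⁻¹ • b) : 𝕜)‖
        = ‖(inner 𝕜 a b : 𝕜)‖ / (‖a‖ * ‖b‖) := by
    intro a b ha hb
    rw [inner_smul_left, inner_smul_right]
    simp only [norm_mul, RCLike.norm_conj, norm_inv, RCLike.norm_ofReal, abs_norm]
    field_simp
  have huv : ‖(inner 𝕜 u v : 𝕜)‖ = ‖(inner 𝕜 x y : 𝕜)‖ / (‖x‖ * ‖y‖) := hinner x y hxn hyn
  have hut : ‖(inner 𝕜 u t : 𝕜)‖ = ‖(inner 𝕜 x z : 𝕜)‖ / (‖x‖ * ‖z‖) := hinner x z hxn hzn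
  have hvt : ‖(inner 𝕜 v t : 𝕜)‖ = ‖(inner 𝕜 y z : 𝕜)‖ / (‖y‖ * ‖z‖) := hinner y z hyn hzn
  have hcos : ∀ (a b : H), (0:ℝ) < ‖a‖ → (0:ℝ) < ‖b‖ →
      Real.cos (acuteAngle 𝕜 a b) = ‖(inner 𝕜 a b : 𝕜)‖ / (‖a‖ * ‖b‖) := by
    intro a b ha hb
    apply Real.cos_arccos
    · have : (0:ℝ) ≤ ‖(inner 𝕜 a b : 𝕜)‖ / (‖a‖ * ‖b‖) := by positivity
      linarith
    · rw [div_le_one (by positivity)]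
      exact norm_inner_le_norm a b
  have hsin : Real.sin (acuteAngle 𝕜 x y)
      = Real.sqrt (1 - ‖(inner 𝕜 u v : 𝕜)‖ ^ 2) := by
    rw [acuteAngle, Real.sin_arccos, huv]
  rw [hcos x z hxn hzn, hcos y z hyn hzn, hsin, ← hut, ← hvt]
  exact key_abs u v t hun hvn htn
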